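/- Let ρ and σ be d×d density matrices with all entries of ρ nonzero. Define Q by Q_{jj} = min(σ_{jj}/ρ_{jj}, 1) and Q_{jk} = σ_{jk}/ρ_{jk} for j ≠ k. If (a) the diagonal of ρ UT-majorizes the diagonal of σ, and (b) Q is positive-semidefinite, then there exists a cooling map E with E(ρ) = σ. -/

import Mathlib

open Finset Matrix
open scoped ComplexOrder

/-- A cooling map: a trace-preserving map admitting a Kraus decomposition into
diagonal operators and multiples of matrix units `|j⟩⟨k|` with `j < k`. -/
def IsCoolingMap {d : ℕ} (E : Matrix (Fin d) (Fin d) ℂ → Matrix (Fin d) (Fin d) ℂ) : Prop :=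
  ∃ (n : ℕ) (lam : Fin d → Fin n → ℂ) (mu : Fin d → Fin d → ℂ),
    (∀ ρ, E ρ =
      (∑ i, (Matrix.diagonal fun j => lam j i) * ρ * (Matrix.diagonal fun j => lam j i)ᴴ) +
      ∑ j, ∑ k, if j < k then
        (mu j k • Matrix.single j k (1 : ℂ)) * ρ *
          (mu j k • Matrix.single j k (1 : ℂ))ᴴ
      else 0) ∧
    (∀ ρ, (E ρ).trace = ρ.trace)

lemma clamp_term (a b x y : ℝ) (hab : a ≤ b) (hyx : y ≤ x) :
    max 0 (min b x - max a y) = min b (max a x) - min b (max a y) := by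
  simp only [min_def, max_def]
  split_ifs <;> linarith

lemma clamp_sum (f : ℕ → ℝ) (hf : ∀ i, f (i + 1) ≤ f i) (a b : ℝ) (hab : a ≤ b) (d : ℕ) :
    ∑ k ∈ Finset.range d, max 0 (min b (f k) - max a (f (k + 1)))
      = min b (max a (f 0)) - min b (max a (f d)) := by
  induction d with
  | zero => simp
  | succ n ih =>
    rw [Finset.sum_range_succ, ih, clamp_term a b (f n) (f (n+1)) hab (hf n)]
    ring

lemma filter_step {d : ℕ} (g : Fin d → ℝ) (m : ℕ) (hm : m < d) :
    ∑ j ∈ univ.filter (fun j : Fin d => m ≤ j.val), g j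
      = g ⟨m, hm⟩ + ∑ j ∈ univ.filter (fun j : Fin d => m + 1 ≤ j.val), g j := by
  have h : univ.filter (fun j : Fin d => m ≤ j.val)
      = insert ⟨m, hm⟩ (univ.filter (fun j : Fin d => m + 1 ≤ j.val)) := by
    ext j
    simp only [Finset.mem_filter, Finset.mem_univ, true_and, Finset.mem_insert, Fin.ext_iff]
    omega
  rw [h, Finset.sum_insert (by simp)]

/-- Existence of the transport plan. -/
lemma transport_plan {d : ℕ} (c e : Fin d → ℝ) (hc : ∀ j, 0 ≤ c j) (he : ∀ j, 0 ≤ e j)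
    (hce : ∀ j, c j = 0 ∨ e j = 0)
    (h0 : ∑ j, c j = ∑ j, e j)
    (hmaj : ∀ m : ℕ, 1 ≤ m →
      ∑ j ∈ univ.filter (fun j : Fin d => m ≤ j.val), c j ≤
        ∑ j ∈ univ.filter (fun j : Fin d => m ≤ j.val), e j) :
    ∃ t : Fin d → Fin d → ℝ,
      (∀ j k, 0 ≤ t j k) ∧ (∀ j k : Fin d, k ≤ j → t j k = 0) ∧
      (∀ j, ∑ k, t j k = c j) ∧ (∀ k, ∑ j, t j k = e k) := by
  classical
  set Cs : ℕ → ℝ := fun m => ∑ j ∈ univ.filter (fun j : Fin d => m ≤ j.val), c j with hCs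
  set Es : ℕ → ℝ := fun m => ∑ j ∈ univ.filter (fun j : Fin d => m ≤ j.val), e j with hEs
  have hCnn : ∀ m, 0 ≤ Cs m := fun m => Finset.sum_nonneg fun j _ => hc j
  have hEnn : ∀ m, 0 ≤ Es m := fun m => Finset.sum_nonneg fun j _ => he j
  have hfe : ∀ m, d ≤ m → univ.filter (fun j : Fin d => m ≤ j.val) = ∅ := by
    intro m hm
    refine Finset.filter_eq_empty_iff.mpr ?_
    intro j _
    have := j.isLt
    omega
  have hCd : Cs d = 0 := by rw [hCs]; simp [hfe d le_rfl]
  have hEd : Es d = 0 := by rw [hEs]; simp [hfe d le_rfl]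
  have hCstep : ∀ m (hm : m < d), Cs m = c ⟨m, hm⟩ + Cs (m + 1) := fun m hm => filter_step c m hm
  have hEstep : ∀ m (hm : m < d), Es m = e ⟨m, hm⟩ + Es (m + 1) := fun m hm => filter_step e m hm
  have hCzero : ∀ m, d ≤ m → Cs m = 0 := by
    intro m hm; rw [hCs]; simp [hfe m hm]
  have hEzero : ∀ m, d ≤ m → Es m = 0 := by
    intro m hm; rw [hEs]; simp [hfe m hm]
  have hCanti : ∀ m, Cs (m + 1) ≤ Cs m := by
    intro m
    by_cases hm : m < d
    · rw [hCstep m hm]; have := hc ⟨m, hm⟩; linarith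
    · rw [hCzero m (by omega), hCzero (m+1) (by omega)]
  have hEanti : ∀ m, Es (m + 1) ≤ Es m := by
    intro m
    by_cases hm : m < d
    · rw [hEstep m hm]; have := he ⟨m, hm⟩; linarith
    · rw [hEzero m (by omega), hEzero (m+1) (by omega)]
  have hC0E0 : Cs 0 = Es 0 := by
    rw [hCs, hEs]
    simp only [Finset.filter_true_of_mem (fun j _ => Nat.zero_le _)]
    exact h0
  have hCE : ∀ m, Cs m ≤ Es m := by
    intro m
    rcases Nat.eq_zero_or_pos m with rfl | hm
    · exact hC0E0.le
    · by_cases hmd : m < d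
      · exact hmaj m hm
      · rw [hCzero m (by omega), hEzero m (by omega)]
  have hCE' : ∀ m, Cs m ≤ Es (m + 1) := by
    intro m
    by_cases hmd : m < d
    · rcases hce ⟨m, hmd⟩ with h | h
      · rw [hCstep m hmd, h, zero_add]
        exact hCE (m + 1)
      · have : Es (m + 1) = Es m := by rw [hEstep m hmd, h, zero_add]
        rw [this]
        exact hCE m
    · rw [hCzero m (by omega)]
      exact hEnn _
  have hCmono : ∀ p q, p ≤ q → Cs q ≤ Cs p := fun p q h => (antitone_nat_of_succ_le hCanti) h
  refine ⟨fun j k => max 0 (min (Cs j.val) (Es k.val) - max (Cs (j.val + 1)) (Es (k.val + 1))),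
    fun j k => le_max_left _ _, ?_, ?_, ?_⟩
  · -- support
    intro j k hkj
    dsimp only
    rw [max_eq_left]
    have h1 : Cs j.val ≤ Cs k.val := hCmono k.val j.val hkj
    have h2 : Cs k.val ≤ Es (k.val + 1) := hCE' k.val
    linarith [min_le_left (Cs j.val) (Es k.val), le_max_right (Cs (j.val + 1)) (Es (k.val + 1))]
  · -- row sums
    intro j
    have hrange : ∑ k : Fin d,
        max 0 (min (Cs j.val) (Es k.val) - max (Cs (j.val + 1)) (Es (k.val + 1)))
        = ∑ k ∈ Finset.range d,
            max 0 (min (Cs j.val) (Es k) - max (Cs (j.val + 1)) (Es (k + 1))) :=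
      Fin.sum_univ_eq_sum_range
        (fun k => max 0 (min (Cs j.val) (Es k) - max (Cs (j.val + 1)) (Es (k + 1)))) d
    rw [hrange, clamp_sum Es hEanti (Cs (j.val + 1)) (Cs j.val) (hCanti j.val) d, hEd]
    have hb0 : Cs j.val ≤ Es 0 := le_trans (hCmono 0 j.val (Nat.zero_le _)) hC0E0.le
    have ha : Cs (j.val + 1) ≤ Cs j.val := hCanti j.val
    have hann : 0 ≤ Cs (j.val + 1) := hCnn _
    have h1 : min (Cs j.val) (max (Cs (j.val + 1)) (Es 0)) = Cs j.val := by
      rw [min_eq_left]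
      exact le_max_of_le_right hb0
    have h2 : min (Cs j.val) (max (Cs (j.val + 1)) 0) = Cs (j.val + 1) := by
      rw [max_eq_left hann, min_eq_right ha]
    rw [h1, h2, hCstep j.val j.isLt]
    simp
  · -- column sums
    intro k
    have hswap : ∀ j : Fin d,
        max 0 (min (Cs j.val) (Es k.val) - max (Cs (j.val + 1)) (Es (k.val + 1)))
        = max 0 (min (Es k.val) (Cs j.val) - max (Es (k.val + 1)) (Cs (j.val + 1))) := by
      intro j; rw [min_comm, max_comm (Cs (j.val + 1))]
    simp only [hswap]
    have hrange : ∑ j : Fin d,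
        max 0 (min (Es k.val) (Cs j.val) - max (Es (k.val + 1)) (Cs (j.val + 1)))
        = ∑ j ∈ Finset.range d,
            max 0 (min (Es k.val) (Cs j) - max (Es (k.val + 1)) (Cs (j + 1))) :=
      Fin.sum_univ_eq_sum_range
        (fun j => max 0 (min (Es k.val) (Cs j) - max (Es (k.val + 1)) (Cs (j + 1)))) d
    rw [hrange, clamp_sum Cs hCanti (Es (k.val + 1)) (Es k.val) (hEanti k.val) d, hCd]
    have hb0 : Es k.val ≤ Cs 0 := by
      rw [hC0E0]
      exact (antitone_nat_of_succ_le hEanti) (Nat.zero_le _)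
    have ha : Es (k.val + 1) ≤ Es k.val := hEanti k.val
    have hann : 0 ≤ Es (k.val + 1) := hEnn _
    have h1 : min (Es k.val) (max (Es (k.val + 1)) (Cs 0)) = Es k.val := by
      rw [min_eq_left]
      exact le_max_of_le_right hb0
    have h2 : min (Es k.val) (max (Es (k.val + 1)) 0) = Es (k.val + 1) := by
      rw [max_eq_left hann, min_eq_right ha]
    rw [h1, h2, hEstep k.val k.isLt]
    simp

lemma diag_kraus_apply {d : ℕ} (f : Fin d → ℂ) (X : Matrix (Fin d) (Fin d) ℂ) (a b : Fin d) :
    ((Matrix.diagonal f) * X * (Matrix.diagonal f)ᴴ) a b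
      = f a * X a b * (starRingEnd ℂ) (f b) := by
  rw [Matrix.diagonal_conjTranspose, Matrix.mul_diagonal, Matrix.diagonal_mul]
  simp [mul_comm, mul_assoc, mul_left_comm]

lemma std_kraus_apply {d : ℕ} (j k a b : Fin d) (X : Matrix (Fin d) (Fin d) ℂ) :
    ((Matrix.single j k (1:ℂ)) * X * (Matrix.single j k (1:ℂ))ᴴ) a b
      = if a = j ∧ b = j then X k k else 0 := by
  simp only [Matrix.mul_apply, Matrix.conjTranspose_apply, Matrix.single, Matrix.of_apply]
  simp only [ite_mul, mul_ite, one_mul, mul_one, zero_mul, mul_zero,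
    apply_ite (starRingEnd ℂ), RingHom.map_one, RingHom.map_zero]
  simp only [Finset.sum_ite_eq, Finset.sum_ite_eq', ite_and, eq_comm]
  split_ifs <;> simp_all [Finset.sum_ite_eq]

lemma smul_kraus_apply {d : ℕ} (m : ℂ) (j k a b : Fin d) (X : Matrix (Fin d) (Fin d) ℂ) :
    ((m • Matrix.single j k (1:ℂ)) * X * (m • Matrix.single j k (1:ℂ))ᴴ) a b
      = m * (starRingEnd ℂ) m * (if a = j ∧ b = j then X k k else 0) := by
  rw [Matrix.conjTranspose_smul, Matrix.smul_mul, Matrix.smul_mul, Matrix.mul_smul,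
    Matrix.smul_apply, Matrix.smul_apply, std_kraus_apply]
  simp only [smul_eq_mul, Complex.star_def]
  ring

lemma cooling_apply {d n : ℕ} (lam : Fin d → Fin n → ℂ) (mu : Fin d → Fin d → ℂ)
    (X : Matrix (Fin d) (Fin d) ℂ) (a b : Fin d) :
    ((∑ i, (Matrix.diagonal fun j => lam j i) * X * (Matrix.diagonal fun j => lam j i)ᴴ) +
      ∑ j, ∑ k, if j < k then
        (mu j k • Matrix.single j k (1 : ℂ)) * X *
          (mu j k • Matrix.single j k (1 : ℂ))ᴴ
      else 0) a b
    = (∑ i, lam a i * (starRingEnd ℂ) (lam b i)) * X a b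
      + (if a = b then
          ∑ k, (if a < k then mu a k * (starRingEnd ℂ) (mu a k) * X k k else 0) else 0) := by
  rw [Matrix.add_apply, Matrix.sum_apply, Matrix.sum_apply]
  congr 1
  · rw [Finset.sum_mul]
    refine Finset.sum_congr rfl fun i _ => ?_
    rw [diag_kraus_apply]
    ring
  · have h2 : ∀ j : Fin d, (∑ k, if j < k then
        (mu j k • Matrix.single j k (1 : ℂ)) * X *
          (mu j k • Matrix.single j k (1 : ℂ))ᴴ else 0) a b
        = ∑ k, if j < k then mu j k * (starRingEnd ℂ) (mu j k) *
            (if a = j ∧ b = j then X k k else 0) else 0 := by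
      intro j
      rw [Matrix.sum_apply]
      refine Finset.sum_congr rfl fun k _ => ?_
      by_cases h : j < k
      · rw [if_pos h, if_pos h, smul_kraus_apply]
      · rw [if_neg h, if_neg h, Matrix.zero_apply]
    simp only [h2]
    by_cases hab : a = b
    · subst hab
      rw [if_pos rfl]
      have h3 : ∀ j k : Fin d, (if j < k then mu j k * (starRingEnd ℂ) (mu j k) *
            (if a = j ∧ a = j then X k k else 0) else 0)
          = if a = j then (if j < k then mu j k * (starRingEnd ℂ) (mu j k) * X k k else 0)
            else 0 := by
        intro j k
        by_cases haj : a = j <;> by_cases hjk : j < k <;> simp [haj, hjk]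
      simp only [h3]
      rw [Finset.sum_comm]
      rw [← Finset.sum_comm]
      have h4 : ∀ j : Fin d, (∑ k, if a = j then
            (if j < k then mu j k * (starRingEnd ℂ) (mu j k) * X k k else 0) else 0)
          = if a = j then
            (∑ k, if j < k then mu j k * (starRingEnd ℂ) (mu j k) * X k k else 0) else 0 := by
        intro j
        by_cases haj : a = j <;> simp [haj]
      simp only [h4]
      rw [Finset.sum_ite_eq]
      simp
    · rw [if_neg hab]
      refine Finset.sum_eq_zero fun j _ => Finset.sum_eq_zero fun k _ => ?_
      have : ¬ (a = j ∧ b = j) := fun ⟨h1, h2⟩ => hab (h1.trans h2.symm)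
      simp [this]

lemma min_div_one_add {x r e' : ℝ} (hr : 0 < r) (he : e' = r - min x r) :
    min (x / r) 1 + e' / r = 1 := by
  have h1 : min (x / r) 1 = min x r / r := by
    rcases le_total x r with h | h
    · rw [min_eq_left h, min_eq_left (by rw [div_le_one hr]; exact h)]
    · rw [min_eq_right h, min_eq_right (by rw [one_le_div hr]; exact h), div_self hr.ne']
  rw [h1, he, ← add_div]
  field_simp
  ring


theorem cooling_map_transition_sufficient
    (d : ℕ) (ρ σ : Matrix (Fin d) (Fin d) ℂ)
    (hρ : ρ.PosSemidef) (hρtr : ρ.trace = 1)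
    (hσ : σ.PosSemidef) (hσtr : σ.trace = 1)
    (hρne : ∀ j k, ρ j k ≠ 0)
    (Q : Matrix (Fin d) (Fin d) ℂ)
    (hQ : ∀ j k : Fin d, Q j k =
      if j = k then ((min ((σ j j).re / (ρ j j).re) 1 : ℝ) : ℂ)
      else σ j k / ρ j k)
    (hmaj : ∀ m : Fin d, 1 ≤ m.val →
      ∑ j ∈ univ.filter (fun j => m ≤ j), (σ j j).re ≤
        ∑ j ∈ univ.filter (fun j => m ≤ j), (ρ j j).re)
    (hQpsd : Q.PosSemidef) :
    ∃ E : Matrix (Fin d) (Fin d) ℂ → Matrix (Fin d) (Fin d) ℂ,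
      IsCoolingMap E ∧ E ρ = σ := by
  classical
  -- diagonal entries are real
  have hρdiag : ∀ j, ((ρ j j).re : ℂ) = ρ j j := by
    intro j
    have h := congrFun (congrFun hρ.1 j) j
    rw [Matrix.conjTranspose_apply] at h
    exact Complex.conj_eq_iff_re.mp h
  have hσdiag : ∀ j, ((σ j j).re : ℂ) = σ j j := by
    intro j
    have h := congrFun (congrFun hσ.1 j) j
    rw [Matrix.conjTranspose_apply] at h
    exact Complex.conj_eq_iff_re.mp h
  -- diagonal entries of ρ are positive, of σ nonnegative
  have hρ0 : ∀ j, 0 ≤ ρ j j := by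
    intro j
    exact hρ.diag_nonneg
  have hσ0 : ∀ j, 0 ≤ σ j j := by
    intro j
    exact hσ.diag_nonneg
  have hρre : ∀ j, 0 < (ρ j j).re := by
    intro j
    have h1 : 0 ≤ (ρ j j).re := (Complex.le_def.mp (hρ0 j)).1
    rcases h1.lt_or_eq with h | h
    · exact h
    · exfalso
      exact hρne j j (by rw [← hρdiag j, ← h]; simp)
  have hσre : ∀ j, 0 ≤ (σ j j).re := fun j => (Complex.le_def.mp (hσ0 j)).1
  -- trace sums
  have htrρ : ∑ j, (ρ j j).re = 1 := by
    have h := congrArg Complex.re hρtr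
    rw [Matrix.trace] at h
    simpa [Matrix.diag, Complex.re_sum] using h
  have htrσ : ∑ j, (σ j j).re = 1 := by
    have h := congrArg Complex.re hσtr
    rw [Matrix.trace] at h
    simpa [Matrix.diag, Complex.re_sum] using h
  -- deficiency and excess
  set cf : Fin d → ℝ := fun j => (σ j j).re - min ((σ j j).re) ((ρ j j).re) with hcf
  set ef : Fin d → ℝ := fun j => (ρ j j).re - min ((σ j j).re) ((ρ j j).re) with hef
  have hcf0 : ∀ j, 0 ≤ cf j := fun j => by
    rw [hcf]; simp only; linarith [min_le_left ((σ j j).re) ((ρ j j).re)]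
  have hef0 : ∀ j, 0 ≤ ef j := fun j => by
    rw [hef]; simp only; linarith [min_le_right ((σ j j).re) ((ρ j j).re)]
  have hcfe : ∀ j, cf j = 0 ∨ ef j = 0 := by
    intro j
    rcases min_choice ((σ j j).re) ((ρ j j).re) with h | h
    · left; rw [hcf]; simp only [h, sub_self]
    · right; rw [hef]; simp only [h, sub_self]
  have h00 : ∑ j, cf j = ∑ j, ef j := by
    rw [hcf, hef]
    rw [Finset.sum_sub_distrib, Finset.sum_sub_distrib, htrρ, htrσ]
  have hmaj' : ∀ m : ℕ, 1 ≤ m →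
      ∑ j ∈ univ.filter (fun j : Fin d => m ≤ j.val), cf j ≤
        ∑ j ∈ univ.filter (fun j : Fin d => m ≤ j.val), ef j := by
    intro m hm
    by_cases hmd : m < d
    · have hset : univ.filter (fun j : Fin d => m ≤ j.val)
          = univ.filter (fun j : Fin d => (⟨m, hmd⟩ : Fin d) ≤ j) := by
        ext j; simp [Fin.le_def]
      have h := hmaj ⟨m, hmd⟩ hm
      rw [hset, hcf, hef]
      rw [Finset.sum_sub_distrib, Finset.sum_sub_distrib]
      linarith
    · have hset : univ.filter (fun j : Fin d => m ≤ j.val) = ∅ := by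
        refine Finset.filter_eq_empty_iff.mpr ?_
        intro j _
        have := j.isLt
        omega
      rw [hset]
      simp
  obtain ⟨t, ht0, htz, hrow, hcol⟩ := transport_plan cf ef hcf0 hef0 hcfe h00 hmaj'
  -- square root of Q, and mu
  obtain ⟨B0, hB0⟩ : ∃ B0 : Matrix (Fin d) (Fin d) ℂ, Q = star B0 * B0 := by
    open scoped MatrixOrder in exact CStarAlgebra.nonneg_iff_eq_star_mul_self.mp hQpsd.nonneg
  obtain ⟨B, hBdef⟩ : ∃ B : Matrix (Fin d) (Fin d) ℂ, B = B0ᴴ := ⟨_, rfl⟩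
  have hBB : ∀ a b, ∑ i, B a i * (starRingEnd ℂ) (B b i) = Q a b := by
    intro a b
    have h1 : B * Bᴴ = Q := by
      rw [hBdef, conjTranspose_conjTranspose, hB0, Matrix.star_eq_conjTranspose]
    calc ∑ i, B a i * (starRingEnd ℂ) (B b i) = (B * Bᴴ) a b := by
          simp [Matrix.mul_apply, Matrix.conjTranspose_apply]
      _ = Q a b := by rw [h1]
  set mu : Fin d → Fin d → ℂ := fun j k => ((Real.sqrt (t j k / (ρ k k).re) : ℝ) : ℂ) with hmu
  have hmusq : ∀ j k, mu j k * (starRingEnd ℂ) (mu j k) = ((t j k / (ρ k k).re : ℝ) : ℂ) := by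
    intro j k
    rw [hmu]
    simp only [Complex.conj_ofReal, ← Complex.ofReal_mul]
    rw [Real.mul_self_sqrt (div_nonneg (ht0 j k) (hρre k).le)]
  have hE : ∀ (X : Matrix (Fin d) (Fin d) ℂ) (a b : Fin d),
      ((∑ i, (Matrix.diagonal fun j => B j i) * X * (Matrix.diagonal fun j => B j i)ᴴ) +
        ∑ j, ∑ k, if j < k then
          (mu j k • Matrix.single j k (1 : ℂ)) * X *
            (mu j k • Matrix.single j k (1 : ℂ))ᴴ
        else 0) a b
      = Q a b * X a b + (if a = b then
          ∑ k, (if a < k then ((t a k / (ρ k k).re : ℝ) : ℂ) * X k k else 0) else 0) := by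
    intro X a b
    rw [cooling_apply (lam := B), hBB]
    congr 1
    by_cases hab : a = b
    · rw [if_pos hab, if_pos hab]
      refine Finset.sum_congr rfl fun k _ => ?_
      by_cases hak : a < k
      · rw [if_pos hak, if_pos hak, hmusq]
      · rw [if_neg hak, if_neg hak]
    · rw [if_neg hab, if_neg hab]
  refine ⟨fun X =>
    (∑ i, (Matrix.diagonal fun j => B j i) * X * (Matrix.diagonal fun j => B j i)ᴴ) +
      ∑ j, ∑ k, if j < k then
        (mu j k • Matrix.single j k (1 : ℂ)) * X *
          (mu j k • Matrix.single j k (1 : ℂ))ᴴ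
      else 0, ⟨d, fun j i => B j i, mu, fun X => rfl, ?_⟩, ?_⟩
  · -- trace preservation
    intro X
    rw [Matrix.trace, Matrix.trace]
    simp only [Matrix.diag]
    have h1 : ∀ a : Fin d, _ = _ := fun a => hE X a a
    calc ∑ a, ((∑ i, (Matrix.diagonal fun j => B j i) * X * (Matrix.diagonal fun j => B j i)ᴴ) +
        ∑ j, ∑ k, if j < k then
          (mu j k • Matrix.single j k (1 : ℂ)) * X *
            (mu j k • Matrix.single j k (1 : ℂ))ᴴ
        else 0) a a
        = ∑ a, (Q a a * X a a +
            ∑ k, (if a < k then ((t a k / (ρ k k).re : ℝ) : ℂ) * X k k else 0)) := by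
          refine Finset.sum_congr rfl fun a _ => ?_
          rw [hE X a a, if_pos rfl]
      _ = ∑ a, Q a a * X a a +
            ∑ k, ∑ a, (if a < k then ((t a k / (ρ k k).re : ℝ) : ℂ) * X k k else 0) := by
          rw [Finset.sum_add_distrib, Finset.sum_comm]
      _ = ∑ a, Q a a * X a a + ∑ k, ((ef k / (ρ k k).re : ℝ) : ℂ) * X k k := by
          congr 1
          refine Finset.sum_congr rfl fun k _ => ?_
          have : ∑ a, (if a < k then ((t a k / (ρ k k).re : ℝ) : ℂ) * X k k else 0)
              = (∑ a, if a < k then ((t a k / (ρ k k).re : ℝ) : ℂ) else 0) * X k k := by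
            rw [Finset.sum_mul]
            refine Finset.sum_congr rfl fun a _ => ?_
            rw [ite_mul, zero_mul]
          rw [this]
          congr 1
          have : ∑ a, (if a < k then ((t a k / (ρ k k).re : ℝ) : ℂ) else 0)
              = (((∑ a, if a < k then t a k / (ρ k k).re else 0 : ℝ)) : ℂ) := by
            push_cast
            refine Finset.sum_congr rfl fun a _ => ?_
            split_ifs <;> simp
          rw [this]
          congr 1
          have : ∑ a, (if a < k then t a k / (ρ k k).re else 0)
              = (∑ a, t a k) / (ρ k k).re := by
            rw [Finset.sum_div]
            refine Finset.sum_congr rfl fun a _ => ?_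
            by_cases hak : a < k
            · rw [if_pos hak]
            · rw [if_neg hak, htz a k (not_lt.mp hak), zero_div]
          rw [this, hcol k]
      _ = ∑ k, X k k := by
          rw [← Finset.sum_add_distrib]
          refine Finset.sum_congr rfl fun k _ => ?_
          rw [← add_mul]
          have : Q k k + ((ef k / (ρ k k).re : ℝ) : ℂ) = 1 := by
            rw [hQ k k, if_pos rfl, ← Complex.ofReal_add,
              min_div_one_add (hρre k) (by rw [hef])]
            norm_num
          rw [this, one_mul]
  · -- E ρ = σ
    ext a b
    beta_reduce
    rw [hE ρ a b]
    by_cases hab : a = b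
    · subst hab
      rw [if_pos rfl]
      have hQρ : Q a a * ρ a a = ((min ((σ a a).re) ((ρ a a).re) : ℝ) : ℂ) := by
        rw [hQ a a, if_pos rfl, ← hρdiag a, ← Complex.ofReal_mul]
        congr 1
        have hr := hρre a
        have h1 : min ((σ a a).re / (ρ a a).re) 1 = min ((σ a a).re) ((ρ a a).re) / (ρ a a).re := by
          rcases le_total ((σ a a).re) ((ρ a a).re) with h | h
          · rw [min_eq_left h, min_eq_left (by rw [div_le_one hr]; exact h)]
          · rw [min_eq_right h, min_eq_right (by rw [one_le_div hr]; exact h), div_self hr.ne']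
        simp only [Complex.ofReal_re]
        rw [h1, div_mul_cancel₀ _ hr.ne']
      have hsum : (∑ k, if a < k then ((t a k / (ρ k k).re : ℝ) : ℂ) * ρ k k else 0)
          = ((cf a : ℝ) : ℂ) := by
        have h2 : ∀ k : Fin d, (if a < k then ((t a k / (ρ k k).re : ℝ) : ℂ) * ρ k k else 0)
            = ((t a k : ℝ) : ℂ) := by
          intro k
          by_cases hak : a < k
          · rw [if_pos hak, ← hρdiag k, ← Complex.ofReal_mul]
            simp only [Complex.ofReal_re]
            rw [div_mul_cancel₀ _ (hρre k).ne']
          · rw [if_neg hak, htz a k (not_lt.mp hak)]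
            norm_num
        rw [Finset.sum_congr rfl fun k _ => h2 k, ← Complex.ofReal_sum, hrow a]
      rw [hQρ, hsum, ← Complex.ofReal_add, hcf]
      simp only
      rw [show min ((σ a a).re) ((ρ a a).re) +
          ((σ a a).re - min ((σ a a).re) ((ρ a a).re)) = (σ a a).re by ring]
      exact hσdiag a
    · rw [if_neg hab, add_zero, hQ a b, if_neg hab, div_mul_cancel₀ _ (hρne a b)]
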